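/- Let g, h, k, s be positive integers with 1 ≤ s ≤ h and k ≥ 1, let γ ∈ F_{q^m}, and let y_{i,j} ∈ F_{q^m} be arbitrary for 0 ≤ i ≤ g−1 and 0 ≤ j ≤ h−1. Set d = ⌈(g(h−s+1) + s(k−1) + 1)/(s+1)⌉ and assume d ≥ k. Then there exist linearized polynomials Q_0, Q_1, ..., Q_s over F_{q^m}, not all zero, such that Q_0 has q-degree at most d−1, each Q_l (1 ≤ l ≤ s) has q-degree at most d−k, and Q_0(γ^{ih+j}) + ∑_{l=1}^{s} Q_l(y_{i,j+l−1}) = 0 for all i = 0, 1, ..., g−1 and j = 0, 1, ..., h−s. -/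

import Mathlib

open Polynomial

/-- The linearized polynomial `∑ i, a i * X^(q^i)` with coefficient vector `a`. -/
noncomputable def linPoly (q : ℕ) {F : Type*} [Field F] {D : ℕ} (a : Fin D → F) : Polynomial F :=
  ∑ i : Fin D, Polynomial.C (a i) * Polynomial.X ^ (q ^ (i : ℕ))

lemma linPoly_eval (q : ℕ) {F : Type*} [Field F] {D : ℕ} (a : Fin D → F) (x : F) :
    (linPoly q a).eval x = ∑ i : Fin D, a i * x ^ (q ^ (i : ℕ)) := by
  simp [linPoly, eval_finset_sum]

/-- Existence of the interpolation polynomial for folded Gabidulin codes: for arbitrary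
received symbols `y_{i,j} ∈ F_{q^m}` (`0 ≤ i ≤ g-1`, `0 ≤ j ≤ h-1`) and
`d = ⌈(g(h-s+1) + s(k-1) + 1)/(s+1)⌉ ≥ k`, there are linearized polynomials `Q_0, …, Q_s`,
not all zero, with `Q_0` of `q`-degree at most `d-1` and each `Q_l` of `q`-degree at most
`d-k`, such that `Q_0(γ^{ih+j}) + ∑_{l=1}^s Q_l(y_{i,j+l-1}) = 0` for all `0 ≤ i ≤ g-1` and
`0 ≤ j ≤ h-s`. -/
theorem stmt8 (q m g h k s d : ℕ) (hq : IsPrimePow q)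
    (hg : 1 ≤ g) (hh : 1 ≤ h) (hs : 1 ≤ s) (hsh : s ≤ h) (hk : 1 ≤ k)
    {F : Type*} [Field F] [Fintype F] (hF : Fintype.card F = q ^ m)
    (γ : F) (y : ℕ → ℕ → F)
    (hd : d = (g * (h - s + 1) + s * (k - 1) + 1 + s) / (s + 1)) (hkd : k ≤ d) :
    ∃ (b0 : Fin d → F) (b : Fin s → Fin (d - k + 1) → F),
      ¬(b0 = 0 ∧ b = 0) ∧
      ∀ i < g, ∀ j, j + s ≤ h →
        (linPoly q b0).eval (γ ^ (i * h + j)) +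
          ∑ l : Fin s, (linPoly q (b l)).eval (y i (j + (l : ℕ))) = 0 := by
  classical
  set A := g * (h - s + 1) + s * (k - 1) + 1 with hA
  -- counting inequality
  obtain ⟨t, ht⟩ : ∃ t, d = k + t := ⟨d - k, by omega⟩
  obtain ⟨k', hk'⟩ : ∃ k', k = k' + 1 := ⟨k - 1, by omega⟩
  have h1 : A ≤ (s + 1) * d := by
    have hdm := Nat.div_add_mod (A + s) (s + 1)
    have hlt : (A + s) % (s + 1) < s + 1 := Nat.mod_lt _ (by omega)
    rw [hd]
    linarith [hdm, hlt]
  have hcount : g * (h - s + 1) < d + s * (d - k + 1) := by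
    have e0 : d - k + 1 = t + 1 := by omega
    rw [e0]
    have e1 : (s + 1) * d = s * k' + s + s * t + k' + 1 + t := by rw [ht, hk']; ring
    have e2 : A = g * (h - s + 1) + s * k' + 1 := by
      have : k - 1 = k' := by omega
      rw [hA, this]
    have e3 : s * (t + 1) = s * t + s := by ring
    have e4 : d = k' + 1 + t := by omega
    rw [e3, e4]
    linarith [h1, e1, e2]
  -- the linear map of the interpolation system
  let Φ : ((Fin d → F) × (Fin s → Fin (d - k + 1) → F)) →ₗ[F]
      (Fin g × Fin (h - s + 1) → F) :=
    { toFun := fun p ij =>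
        (∑ u : Fin d, p.1 u * (γ ^ ((ij.1 : ℕ) * h + (ij.2 : ℕ))) ^ q ^ (u : ℕ)) +
        ∑ l : Fin s, ∑ u : Fin (d - k + 1),
          p.2 l u * (y (ij.1 : ℕ) ((ij.2 : ℕ) + (l : ℕ))) ^ q ^ (u : ℕ)
      map_add' := by
        rintro ⟨a1, b1⟩ ⟨a2, b2⟩
        funext ij
        show _ = (_ : F) + _
        simp [Prod.mk_add_mk, Pi.add_apply, add_mul, Finset.sum_add_distrib]
        ring
      map_smul' := by
        rintro c ⟨a, b⟩
        funext ij
        show _ = c • (_ : F)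
        simp [Prod.smul_mk, Pi.smul_apply, smul_eq_mul, Finset.mul_sum,
          mul_add, mul_assoc] }
  have frV : Module.finrank F ((Fin d → F) × (Fin s → Fin (d - k + 1) → F))
      = d + s * (d - k + 1) := by
    simp [Module.finrank_prod, Module.finrank_pi, Module.finrank_pi_fintype,
      Finset.sum_const, mul_comm]
  have frW : Module.finrank F (Fin g × Fin (h - s + 1) → F) = g * (h - s + 1) := by
    simp [Module.finrank_pi]
  have hni : ¬ Function.Injective Φ := by
    intro hinj
    have hle := LinearMap.finrank_le_finrank_of_injective hinj
    rw [frV, frW] at hle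
    exact absurd hle hcount.not_ge
  have hker : LinearMap.ker Φ ≠ ⊥ := fun hk0 => hni (LinearMap.ker_eq_bot.mp hk0)
  obtain ⟨x, hxker, hx0⟩ := (Submodule.ne_bot_iff _).mp hker
  refine ⟨x.1, x.2, ?_, ?_⟩
  · rintro ⟨h1', h2'⟩
    exact hx0 (Prod.ext h1' h2')
  · intro i hi j hj
    have hj' : j < h - s + 1 := by omega
    have heq := congrFun (LinearMap.mem_ker.mp hxker) (⟨i, hi⟩, ⟨j, hj'⟩)
    simp only [Φ, LinearMap.coe_mk, AddHom.coe_mk, Pi.zero_apply] at heq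
    simpa [linPoly_eval] using heq
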